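/- Let p be a prime, u ≥ 1, n = p^u, γ a divisor of n+1 and δ a divisor of n^2-n+1. Suppose either (n = 5, γ = 2, δ = 1), or (n ≥ 7, γ ≤ 2, δ ≤ (√(2γn+1)-1)/2), or (n ≥ 7, γ > 2, γδ(γδ - δ - 1) < n). Then there exist no nonnegative integers v, w with v + w = u such that δ·(p^{3u} - γ·p^{3u-w} + (gcd(2,γ)-1)·p^u - γ + gcd(2,γ)) = -p^{3u} + p^{3u-v} - p^{3u-w} + p^{2u}. -/

import Mathlib

set_option maxHeartbeats 1600000 in
/-- for a prime `p`, `u ≥ 1`, `n = p^u`, `γ ∣ n+1`, `δ ∣ n^2-n+1`,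
under one of the three hypotheses of Theorem 6.4, there are no nonnegative integers
`v, w` with `v + w = u` and
`δ(p^{3u} - γp^{3u-w} + (gcd(2,γ)-1)p^u - γ + gcd(2,γ)) = -p^{3u} + p^{3u-v} - p^{3u-w} + p^{2u}`. -/
theorem stmt_14 (p u : ℕ) (hp : p.Prime) (hu : 1 ≤ u) (n : ℤ) (hn : n = (p : ℤ) ^ u)
    (γ δ : ℤ) (hγ : γ ∣ n + 1) (hδ : δ ∣ n ^ 2 - n + 1) (hγp : 0 < γ) (hδp : 0 < δ)
    (hcase : (n = 5 ∧ γ = 2 ∧ δ = 1) ∨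
      (7 ≤ n ∧ γ ≤ 2 ∧ (δ : ℝ) ≤ (Real.sqrt (2 * (γ : ℝ) * (n : ℝ) + 1) - 1) / 2) ∨
      (7 ≤ n ∧ 2 < γ ∧ γ * δ * (γ * δ - δ - 1) < n)) :
    ¬ ∃ v w : ℕ, v + w = u ∧
      δ * ((p : ℤ) ^ (3 * u) - γ * (p : ℤ) ^ (3 * u - w)
          + ((Int.gcd 2 γ : ℤ) - 1) * (p : ℤ) ^ u - γ + Int.gcd 2 γ) =
        -(p : ℤ) ^ (3 * u) + (p : ℤ) ^ (3 * u - v) - (p : ℤ) ^ (3 * u - w)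
          + (p : ℤ) ^ (2 * u) := by
  rintro ⟨v, w, hvw, heq⟩
  set g : ℤ := (Int.gcd 2 γ : ℤ) with hg
  have hp2 : (2:ℤ) ≤ (p:ℤ) := by exact_mod_cast hp.two_le
  have hn5 : (5:ℤ) ≤ n := by
    rcases hcase with ⟨h,_,_⟩|⟨h,_,_⟩|⟨h,_,_⟩ <;> linarith
  have hn0 : (0:ℤ) < n := by linarith
  have hg0 : 0 < g := by
    rw [hg]
    have h1 : Int.gcd 2 γ ≠ 0 := by simp [Int.gcd_eq_zero_iff]
    exact_mod_cast Nat.pos_of_ne_zero h1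
  have hgle2 : g ≤ 2 := by
    rw [hg]; exact Int.le_of_dvd two_pos (Int.gcd_dvd_left 2 γ)
  have hgval : g = 1 ∨ g = 2 := by omega
  -- rewrite the equation in terms of n and the residual powers
  have ew : 3 * u - w = 2 * u + v := by omega
  have ev : 3 * u - v = 2 * u + w := by omega
  have e3 : ((p:ℤ)) ^ (3 * u) = n ^ 3 := by rw [hn, ← pow_mul, Nat.mul_comm u 3]
  have e2 : ((p:ℤ)) ^ (2 * u) = n ^ 2 := by rw [hn, ← pow_mul, Nat.mul_comm u 2]
  have ew' : ((p:ℤ)) ^ (2 * u + v) = n ^ 2 * (p:ℤ) ^ v := by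
    rw [pow_add, hn, ← pow_mul, Nat.mul_comm u 2]
  have ev' : ((p:ℤ)) ^ (2 * u + w) = n ^ 2 * (p:ℤ) ^ w := by
    rw [pow_add, hn, ← pow_mul, Nat.mul_comm u 2]
  rw [ew, ev, e3, e2, ew', ev', ← hn] at heq
  -- heq : δ * (n^3 - γ*(n^2*p^v) + (g-1)*n - γ + g)
  --        = -n^3 + n^2*p^w - n^2*p^v + n^2
  rcases Nat.eq_zero_or_pos v with hv0 | hv1
  · -- case v = 0, w = u
    subst hv0
    have hwu : w = u := by omega
    subst hwu
    rw [pow_zero, ← hn] at heq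
    have h0 : δ * (n ^ 3 - γ * n ^ 2 + (g - 1) * n - γ + g) = 0 := by
      linear_combination heq
    have hbr : n ^ 3 - γ * n ^ 2 + (g - 1) * n - γ + g = 0 := by
      rcases mul_eq_zero.mp h0 with h | h
      · exact absurd h (by linarith)
      · exact h
    have hkey2 : (γ - n) * (n ^ 2 + 1) = (g - 2) * n + g := by
      linear_combination (-1 : ℤ) * hbr
    rcases lt_trichotomy γ n with h | h | h
    · have hb : (γ - n) * (n ^ 2 + 1) ≤ (-1) * (n ^ 2 + 1) :=
        mul_le_mul_of_nonneg_right (by linarith) (by positivity)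
      rcases hgval with h' | h' <;> rw [h'] at hkey2 <;>
        linarith [sq_nonneg (n - 1), sq_nonneg n]
    · rw [h] at hkey2
      rcases hgval with h' | h' <;> rw [h'] at hkey2 <;>
        linarith [sq_nonneg (n - 1), sq_nonneg n]
    · have hb : (1 : ℤ) * (n ^ 2 + 1) ≤ (γ - n) * (n ^ 2 + 1) :=
        mul_le_mul_of_nonneg_right (by linarith) (by positivity)
      rcases hgval with h' | h' <;> rw [h'] at hkey2 <;>
        linarith [sq_nonneg (n - 1), sq_nonneg n]
  · -- case v ≥ 1
    have hT2 : (2:ℤ) ≤ (p:ℤ) ^ v := by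
      calc (2:ℤ) ≤ (p:ℤ) := hp2
        _ = (p:ℤ) ^ 1 := (pow_one _).symm
        _ ≤ (p:ℤ) ^ v := pow_le_pow_right₀ (by linarith) hv1
    have hS0 : (0:ℤ) < (p:ℤ) ^ w := pow_pos (by linarith) w
    have hS1 : (1:ℤ) ≤ (p:ℤ) ^ w := hS0
    have hT0 : (0:ℤ) < (p:ℤ) ^ v := pow_pos (by linarith) v
    have hST : (p:ℤ) ^ w * (p:ℤ) ^ v = n := by
      rw [← pow_add, hn]; congr 1; omega
    have h2S : 2 * (p:ℤ) ^ w ≤ n := by nlinarith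
    have hTn : (p:ℤ) ^ v ≤ n := by nlinarith
    have hdvd : n ∣ δ * (γ - g) :=
      ⟨δ * n ^ 2 - δ * γ * n * (p:ℤ) ^ v + δ * (g - 1) + n ^ 2 - n * (p:ℤ) ^ w
        + n * (p:ℤ) ^ v - n, by linear_combination -heq⟩
    -- helper for the γ = 2 (hence g = 2) situation: n ∣ δ
    have hcase2 : γ = 2 → g = 2 → δ < n → False := by
      intro hγ2 hg2 hδltn
      rw [hγ2, hg2] at heq
      have hdvd2 : n * n ∣ δ * n :=
        ⟨-δ * n + 2 * δ * (p:ℤ) ^ v - n + (p:ℤ) ^ w - (p:ℤ) ^ v + 1, by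
          linear_combination heq⟩
      have hdvdδ : n ∣ δ := (mul_dvd_mul_iff_right (show n ≠ 0 by linarith)).mp hdvd2
      have := Int.le_of_dvd hδp hdvdδ
      linarith
    have hcase1 : γ = 1 → g = 1 → False := by
      intro hγ1 hg1
      rw [hγ1, hg1] at heq
      -- δ * (n^3 - n^2 * p^v) ≥ 0 but RHS < 0
      have h1 : 0 ≤ δ * (n ^ 2 * (n - (p:ℤ) ^ v)) :=
        mul_nonneg hδp.le (mul_nonneg (by positivity) (by linarith))
      have h2 : n ^ 2 * (2 * (p:ℤ) ^ w) ≤ n ^ 2 * n :=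
        mul_le_mul_of_nonneg_left h2S (by positivity)
      have h3 : n ^ 2 * 2 ≤ n ^ 2 * (p:ℤ) ^ v :=
        mul_le_mul_of_nonneg_left hT2 (by positivity)
      have h4 : (0:ℤ) < n ^ 3 := by positivity
      have h5 : (0:ℤ) < n ^ 2 := by positivity
      linarith [heq, h1, h2, h3, h4, h5]
    rcases hcase with ⟨hn5', hγ2, hδ1⟩ | ⟨hn7, hγ2, hδr⟩ | ⟨hn7, hγ2, hδn⟩
    · -- n = 5, γ = 2, δ = 1
      have hg2 : g = 2 := by rw [hg, hγ2]; decide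
      exact hcase2 hγ2 hg2 (by rw [hδ1]; linarith)
    · -- n ≥ 7, γ ≤ 2
      have hδb : 2 * δ * (δ + 1) ≤ γ * n := by
        have hγR : (0:ℝ) < (γ:ℝ) := by exact_mod_cast hγp
        have hnR : (7:ℝ) ≤ (n:ℝ) := by exact_mod_cast hn7
        have hδR : (0:ℝ) < (δ:ℝ) := by exact_mod_cast hδp
        have hX : (0:ℝ) ≤ 2 * (γ:ℝ) * (n:ℝ) + 1 := by
          have h7 : (0:ℝ) < (n:ℝ) := by linarith
          have := mul_pos hγR h7
          linarith
        have h1 : 2 * (δ:ℝ) + 1 ≤ Real.sqrt (2 * (γ:ℝ) * (n:ℝ) + 1) := by linarith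
        have h2 : (2 * (δ:ℝ) + 1) ^ 2 ≤ 2 * (γ:ℝ) * (n:ℝ) + 1 := by
          have h0 : (0:ℝ) ≤ 2 * (δ:ℝ) + 1 := by linarith
          have h2' := pow_le_pow_left₀ h0 h1 2
          rwa [Real.sq_sqrt hX] at h2'
        have h3 : (2 * δ + 1) ^ 2 ≤ 2 * γ * n + 1 := by exact_mod_cast h2
        linarith [h3]
      interval_cases γ
      · exact hcase1 rfl (by rw [hg]; decide)
      · have hg2 : g = 2 := by rw [hg]; decide
        refine hcase2 rfl hg2 ?_
        have hd1 : 0 ≤ (δ - 1) * δ := mul_nonneg (by linarith) (by linarith)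
        linarith [hδb, hd1]
    · -- n ≥ 7, γ > 2
      have hpos : 0 < δ * (γ - g) := mul_pos hδp (by linarith)
      have hlt : δ * (γ - g) < n := by
        have hx2 : 2 ≤ δ * (γ - 1) := by
          have := mul_nonneg (show (0:ℤ) ≤ δ - 1 by linarith)
            (show (0:ℤ) ≤ γ - 1 by linarith)
          nlinarith [this]
        have hint1 : 0 ≤ δ * (γ * (δ * (γ - 1) - 2)) :=
          mul_nonneg hδp.le (mul_nonneg hγp.le (by linarith))
        linarith [hδn, hint1, mul_nonneg hδp.le hg0.le]
      have := Int.le_of_dvd hpos hdvd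
      linarith
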